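/- For γ > -1, the function u(x) = log(λ²/(1 + c λ² |x|^{2(1+γ)})²) + 2γ log|x|, with c = 1/(8(1+γ)²), satisfies ∫_{ℝ²} e^u dx = 8π(1+γ). -/

import Mathlib

open MeasureTheory Set

/-- For `γ > -1`, with `c = 1/(8(1+γ)²)`, the function
`e^{u(x)} = |x|^{2γ} λ²/(1 + c λ² |x|^{2(1+γ)})²` satisfies `∫_{ℝ²} e^u = 8π(1+γ)`. -/
theorem stmt_2 (lam γ : ℝ) (hlam : 0 < lam) (hγ : -1 < γ)
    (c : ℝ) (hc : c = 1 / (8 * (1 + γ) ^ 2)) :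
    ∫ x : EuclideanSpace ℝ (Fin 2),
      ‖x‖ ^ (2 * γ) * lam ^ 2 / (1 + c * lam ^ 2 * ‖x‖ ^ (2 * (1 + γ))) ^ 2
      = 8 * Real.pi * (1 + γ) := by
  have hγ1 : (0:ℝ) < 1 + γ := by linarith
  have hc0 : 0 < c := by rw [hc]; positivity
  set a := c * lam ^ 2 with ha
  have ha0 : 0 < a := by positivity
  set p := 2 * (1 + γ) with hp
  have hp0 : 0 < p := by rw [hp]; linarith
  have hden : ∀ y : ℝ, 0 ≤ y → 0 < 1 + a * y ^ p := by
    intro y hy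
    have h1 : 0 ≤ y ^ p := Real.rpow_nonneg hy p
    nlinarith
  set F : ℝ → ℝ := fun y => -(4 * (1 + γ)) / (1 + a * y ^ p) with hF
  -- derivative of the antiderivative
  have hderiv : ∀ y ∈ Ioi (0:ℝ), HasDerivAt F
      (y ^ (2*γ+1) * lam ^ 2 / (1 + a * y ^ p) ^ 2) y := by
    intro y hy
    have hy0 : 0 < y := hy
    have h1 : HasDerivAt (fun y : ℝ => 1 + a * y ^ p) (a * (p * y ^ (p - 1))) y :=
      ((Real.hasDerivAt_rpow_const (Or.inl hy0.ne')).const_mul a).const_add 1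
    have h2 := (h1.inv (hden y hy0.le).ne').const_mul (-(4 * (1 + γ)))
    have heq : ∀ z : ℝ, F z = -(4 * (1 + γ)) * (1 + a * z ^ p)⁻¹ := by
      intro z; rw [hF]; ring
    rw [show F = fun z => -(4 * (1 + γ)) * (1 + a * z ^ p)⁻¹ from funext heq]
    refine h2.congr_deriv (Eq.symm ?_)
    have hpm : p - 1 = 2*γ + 1 := by rw [hp]; ring
    have hKap : 4 * (1 + γ) * a * p = lam ^ 2 := by
      rw [ha, hc, hp]; field_simp; ring
    rw [hpm]
    have hdne : (1 + a * y ^ p) ≠ 0 := (hden y hy0.le).ne'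
    field_simp
    nlinarith [Real.rpow_nonneg hy0.le (2*γ+1), sq_nonneg (1 + a * y ^ p)]
  -- nonnegativity of the integrand
  have hpos : ∀ y ∈ Ioi (0:ℝ), 0 ≤ y ^ (2*γ+1) * lam ^ 2 / (1 + a * y ^ p) ^ 2 := by
    intro y hy
    have hy0 : (0:ℝ) < y := hy
    have := Real.rpow_nonneg hy0.le (2*γ+1)
    positivity
  -- limit at infinity
  have htop : Filter.Tendsto F Filter.atTop (nhds 0) := by
    have h1 : Filter.Tendsto (fun y : ℝ => 1 + a * y ^ p) Filter.atTop Filter.atTop := by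
      apply Filter.tendsto_atTop_add_const_left
      exact (tendsto_rpow_atTop hp0).const_mul_atTop ha0
    have h2 : Filter.Tendsto (fun y : ℝ => (1 + a * y ^ p)⁻¹) Filter.atTop (nhds 0) :=
      h1.inv_tendsto_atTop
    have h3 := h2.const_mul (-(4 * (1 + γ)))
    rw [mul_zero] at h3
    refine h3.congr fun y => by rw [hF]; ring
  -- continuity at 0 from the right
  have hcont : ContinuousWithinAt F (Ici 0) 0 := by
    apply ContinuousAt.continuousWithinAt
    have h1 : ContinuousAt (fun y : ℝ => 1 + a * y ^ p) 0 :=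
      continuousAt_const.add ((Real.continuousAt_rpow_const 0 p (Or.inr hp0.le)).const_mul a)
    exact continuousAt_const.div h1 (hden 0 le_rfl).ne'
  have hF0 : F 0 = -(4 * (1 + γ)) := by
    rw [hF]
    simp [Real.zero_rpow hp0.ne']
  -- the radial integral
  have hradial : ∫ y in Ioi (0:ℝ), y ^ (2*γ+1) * lam ^ 2 / (1 + a * y ^ p) ^ 2
      = 4 * (1 + γ) := by
    rw [integral_Ioi_of_hasDerivAt_of_nonneg hcont hderiv hpos htop, hF0]
    ring
  -- reduce to the radial integral via polar-type formula
  have hmain := integral_fun_norm_addHaar (volume : Measure (EuclideanSpace ℝ (Fin 2)))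
    (fun r : ℝ => r ^ (2*γ) * lam ^ 2 / (1 + a * r ^ p) ^ 2)
  have hdim : Module.finrank ℝ (EuclideanSpace ℝ (Fin 2)) = 2 := by
    simp [finrank_euclideanSpace]
  rw [hdim] at hmain
  have hball : ((volume : Measure (EuclideanSpace ℝ (Fin 2))) (Metric.ball 0 1)).toReal
      = Real.pi := by
    rw [EuclideanSpace.volume_ball]
    norm_num [Real.Gamma_two, Real.sq_sqrt Real.pi_pos.le,
      ENNReal.toReal_ofReal Real.pi_pos.le]
  rw [measureReal_def, hball] at hmain
  have hinner : ∫ y in Ioi (0:ℝ), y ^ (2 - 1 : ℕ) • (y ^ (2*γ) * lam ^ 2 / (1 + a * y ^ p) ^ 2)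
      = 4 * (1 + γ) := by
    rw [← hradial]
    apply setIntegral_congr_fun measurableSet_Ioi
    intro y hy
    have hy0 : (0:ℝ) < y := hy
    have : y ^ (2*γ+1) = y ^ (2*γ) * y := by
      rw [Real.rpow_add hy0, Real.rpow_one]
    simp only [smul_eq_mul, pow_one, this]
    ring
  rw [hinner] at hmain
  calc ∫ x : EuclideanSpace ℝ (Fin 2),
      ‖x‖ ^ (2 * γ) * lam ^ 2 / (1 + c * lam ^ 2 * ‖x‖ ^ (2 * (1 + γ))) ^ 2
      = ∫ x : EuclideanSpace ℝ (Fin 2),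
        (fun r : ℝ => r ^ (2*γ) * lam ^ 2 / (1 + a * r ^ p) ^ 2) ‖x‖ := by
        simp only [← ha, ← hp]
    _ = 2 • Real.pi • (4 * (1 + γ)) := hmain
    _ = 8 * Real.pi * (1 + γ) := by
        simp only [nsmul_eq_mul, smul_eq_mul, Nat.cast_ofNat]
        ring
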